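/- Let ν and μ be probability measures on ℝ with densities f/Z_f and g/Z_g respectively, where g(x) = e^{mx} f(x), f is even, nonnegative and integrable, m > 0, Z_f = ∫f, Z_g = ∫g. Then the total variation distance ‖μ − ν‖_TV = ∫ (1 − dμ/dν)⁺ dν satisfies ‖μ − ν‖_TV ≥ ∫_0^∞ (1 − e^{-mx}) ν(dx). -/
import Mathlib


open MeasureTheory

theorem tv_lower_bound_even_density (f : ℝ → ℝ) (m : ℝ) (hm : 0 < m)
    (heven : ∀ x, f (-x) = f x) (hnonneg : ∀ x, 0 ≤ f x)
    (hint : Integrable f)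
    (hint' : Integrable fun x => Real.exp (m * x) * f x)
    (Zf Zg : ℝ) (hZf : Zf = ∫ x, f x) (hZg : Zg = ∫ x, Real.exp (m * x) * f x)
    (hZfpos : 0 < Zf)
    (ν : Measure ℝ)
    (hν : ν = volume.withDensity fun x => ENNReal.ofReal (f x / Zf)) :
    ∫ x in Set.Ioi (0:ℝ), (1 - Real.exp (-(m * x))) ∂ν
      ≤ ∫ x, max (1 - Real.exp (m * x) * Zf / Zg) 0 ∂ν := by
  -- ν is a finite measure
  have hfm : AEMeasurable f volume := hint.aestronglyMeasurable.aemeasurable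
  have hdnn : ∀ x, 0 ≤ f x / Zf := fun x => div_nonneg (hnonneg x) hZfpos.le
  have hfin : IsFiniteMeasure ν := by
    constructor
    rw [hν, MeasureTheory.withDensity_apply _ MeasurableSet.univ, Measure.restrict_univ,
      ← ofReal_integral_eq_lintegral_ofReal (hint.div_const Zf) (ae_of_all _ hdnn)]
    exact ENNReal.ofReal_lt_top
  -- Zf ≤ Zg
  have hnegint : Integrable (fun x => Real.exp (-(m * x)) * f x) := by
    have := hint'.comp_neg
    simpa [heven, mul_comm, neg_mul, mul_neg] using this
  have hZfg : Zf ≤ Zg := by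
    have hneg : (∫ x, Real.exp (-(m * x)) * f x) = Zg := by
      rw [hZg, ← MeasureTheory.integral_neg_eq_self (fun x => Real.exp (m * x) * f x) volume]
      simp [heven]
    have h2 : (2:ℝ) * Zf ≤ 2 * Zg := by
      have : (2:ℝ) * Zg = ∫ x, (Real.exp (m * x) * f x + Real.exp (-(m * x)) * f x) := by
        rw [integral_add hint' hnegint, hneg, ← hZg]; ring
      rw [this, hZf, ← MeasureTheory.integral_const_mul (2:ℝ) f]
      refine integral_mono (hint.const_mul (2:ℝ)) (hint'.add hnegint) fun x => ?_
      have h1 := Real.exp_pos (m * x)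
      have h2 := Real.exp_pos (-(m * x))
      have h3 : Real.exp (m * x) * Real.exp (-(m * x)) = 1 := by
        rw [← Real.exp_add]; simp
      have h4 : (2:ℝ) ≤ Real.exp (m * x) + Real.exp (-(m * x)) := by
        nlinarith [sq_nonneg (Real.exp (m * x) - 1)]
      have := hnonneg x
      nlinarith
    linarith
  have hZgpos : 0 < Zg := lt_of_lt_of_le hZfpos hZfg
  -- representation of set integrals against ν
  have hrep : ∀ (s : Set ℝ), MeasurableSet s → ∀ g : ℝ → ℝ,
      ∫ x in s, g x ∂ν = ∫ x in s, (f x / Zf) * g x := by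
    intro s hs g
    rw [hν]
    have : (fun x => ENNReal.ofReal (f x / Zf))
        = fun x => ((f x / Zf).toNNReal : ENNReal) := rfl
    rw [this, setIntegral_withDensity_eq_setIntegral_smul₀
      ((hfm.div_const Zf).real_toNNReal.restrict) g hs]
    refine setIntegral_congr_fun hs fun x _ => ?_
    simp [NNReal.smul_def, Real.coe_toNNReal _ (hdnn x)]
  -- symmetry step
  have hsym : ∫ x in Set.Ioi (0:ℝ), (1 - Real.exp (-(m * x))) ∂ν
      = ∫ x in Set.Iic (0:ℝ), (1 - Real.exp (m * x)) ∂ν := by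
    rw [hrep _ measurableSet_Ioi _, hrep _ measurableSet_Iic _]
    have := integral_comp_neg_Iic (0:ℝ)
      (fun x => (f x / Zf) * (1 - Real.exp (-(m * x))))
    rw [neg_zero] at this
    rw [← this]
    refine setIntegral_congr_fun measurableSet_Iic fun x _ => ?_
    simp [heven, mul_comm, mul_neg, neg_neg]
  rw [hsym]
  -- integrability of the max function
  have hMcont : Continuous fun x => max (1 - Real.exp (m * x) * Zf / Zg) 0 := by
    fun_prop
  have hMint : Integrable (fun x => max (1 - Real.exp (m * x) * Zf / Zg) 0) ν := by
    refine Integrable.mono' (integrable_const 1) hMcont.aestronglyMeasurable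
      (ae_of_all _ fun x => ?_)
    have h1 : (0:ℝ) ≤ Real.exp (m * x) * Zf / Zg :=
      div_nonneg (mul_nonneg (Real.exp_pos _).le hZfpos.le) hZgpos.le
    rw [Real.norm_eq_abs, abs_of_nonneg (le_max_right _ _)]
    simp only [max_le_iff]
    constructor <;> linarith
  have h1 : ∫ x in Set.Iic (0:ℝ), (1 - Real.exp (m * x)) ∂ν
      ≤ ∫ x in Set.Iic (0:ℝ), max (1 - Real.exp (m * x) * Zf / Zg) 0 ∂ν := by
    refine setIntegral_mono_on ?_ (hMint.restrict) measurableSet_Iic fun x hx => ?_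
    · refine Integrable.mono' (integrable_const 1)
        (continuous_const.sub ((Real.continuous_exp).comp
          (continuous_const.mul continuous_id))).aestronglyMeasurable ?_
      rw [ae_restrict_iff' measurableSet_Iic]
      refine ae_of_all _ fun x hx => ?_
      have := Real.exp_pos (m * x)
      have h2 : Real.exp (m * x) ≤ 1 := Real.exp_le_one_iff.mpr
        (mul_nonpos_of_nonneg_of_nonpos hm.le hx)
      rw [Real.norm_eq_abs, abs_of_nonneg (by linarith)]
      linarith
    · refine le_trans ?_ (le_max_left _ _)
      have := Real.exp_pos (m * x)
      have hle : Real.exp (m * x) * Zf / Zg ≤ Real.exp (m * x) := by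
        rw [div_le_iff₀ hZgpos]
        nlinarith
      linarith
  refine h1.trans ?_
  refine setIntegral_le_integral hMint (ae_of_all _ fun x => ?_)
  exact le_max_right _ _
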